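/- Let N be a normal subgroup of a finite group G. Then [N,G] equals the intersection of the kernels of all linear G-invariant irreducible characters of N. -/

import Mathlib

open scoped Classical
set_option linter.unusedSectionVars false

noncomputable section

namespace CT

variable {G : Type} [Group G] [Fintype G]

/-- `χ` is the character of an irreducible (simple) finite-dimensional complex
representation of `G`. -/
def IsIrrChar (G : Type) [Group G] (χ : G → ℂ) : Prop :=
  ∃ V : FDRep ℂ G, CategoryTheory.Simple V ∧ χ = V.character

/-- The conjugate character `θ^g`, given by `θ^g (n) = θ (g n g⁻¹)`. -/
def conjChar (N : Subgroup G) [hN : N.Normal] (θ : ↥N → ℂ) (g : G) : ↥N → ℂ :=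
  fun n => θ ⟨g * (n : G) * g⁻¹, hN.conj_mem _ n.2 g⟩

lemma conjChar_one (N : Subgroup G) [N.Normal] (θ : ↥N → ℂ) :
    conjChar N θ 1 = θ := by
  funext n; simp [conjChar]

lemma conjChar_mul (N : Subgroup G) [N.Normal] (θ : ↥N → ℂ) (a b : G) :
    conjChar N θ (a * b) = conjChar N (conjChar N θ a) b := by
  funext n
  simp only [conjChar, Subtype.coe_mk]
  congr 1
  ext
  simp [mul_assoc]

/-- `θ` is a `G`-invariant character of `N`. -/
def IsInv (N : Subgroup G) [N.Normal] (θ : ↥N → ℂ) : Prop :=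
  ∀ g : G, conjChar N θ g = θ

/-- The inertia subgroup `I_G(θ)` of a character `θ` of `N` in `G`. -/
def inertia (N : Subgroup G) [N.Normal] (θ : ↥N → ℂ) : Subgroup G where
  carrier := {g : G | conjChar N θ g = θ}
  one_mem' := conjChar_one N θ
  mul_mem' := by
    intro a b ha hb
    show conjChar N θ (a * b) = θ
    rw [conjChar_mul, ha, hb]
  inv_mem' := by
    intro a ha
    show conjChar N θ a⁻¹ = θ
    have h := conjChar_mul N θ a a⁻¹
    rw [mul_inv_cancel, conjChar_one, ha] at h
    exact h.symm

/-- The minimal `G`-invariant character `θ̂` of `N` over `θ`: the sum of the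
distinct `G`-conjugates of `θ`. -/
def hat (N : Subgroup G) [N.Normal] (θ : ↥N → ℂ) : ↥N → ℂ :=
  fun n => ∑ f ∈ Finset.univ.image (fun g : G => conjChar N θ g), f n

/-- The usual inner product of class functions. -/
def inner' (α : Type*) [Fintype α] (f h : α → ℂ) : ℂ :=
  (Fintype.card α : ℂ)⁻¹ * ∑ x, f x * (starRingEnd ℂ) (h x)

/-- `χ ∈ Irr(G | θ)` : the restriction of `χ` to `N` has `θ` as a constituent. -/
def Over (N : Subgroup G) (χ : G → ℂ) (θ : ↥N → ℂ) : Prop :=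
  inner' ↥N (fun n => χ ↑n) θ ≠ 0

/-- The character of `N` induced from a character `lam` of `H ≤ N`. -/
def ind (H N : Subgroup G) (lam : ↥H → ℂ) : ↥N → ℂ :=
  fun n => (Fintype.card ↥H : ℂ)⁻¹ *
    ∑ x : ↥N, if h : (x : G) * (n : G) * (x : G)⁻¹ ∈ H then lam ⟨_, h⟩ else 0

/-- The character of `G` induced from a character `lam` of `H`. -/
def indG (H : Subgroup G) (lam : ↥H → ℂ) : G → ℂ :=
  fun g => (Fintype.card ↥H : ℂ)⁻¹ *
    ∑ x : G, if h : x * g * x⁻¹ ∈ H then lam ⟨_, h⟩ else 0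

/-- The lower central `G`-series of `N` : `gammaG N k = Γ^{k+1}_G(N)`, so
`gammaG N 0 = N` and `gammaG N (k+1) = [gammaG N k, G]`. -/
def gammaG (N : Subgroup G) : ℕ → Subgroup G
  | 0 => N
  | (k + 1) => ⁅gammaG N k, (⊤ : Subgroup G)⁆

/-- The upper central `G`-series of `N` (as subsets of `G`):
`zUpper N 0 = 1` and `zUpper N (k+1)` is the preimage in `N` of
`Z(G/Z^k) ∩ N/Z^k`, i.e. the set of `x ∈ N` all of whose commutators with
elements of `G` lie in `zUpper N k`. -/
def zUpper (N : Subgroup G) : ℕ → Set G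
  | 0 => {1}
  | (k + 1) => {x : G | x ∈ N ∧ ∀ y : G, x * y * x⁻¹ * y⁻¹ ∈ zUpper N k}

end CT


namespace CT

open Module CategoryTheory

set_option maxHeartbeats 1000000 in
lemma simple_of_finrank_one {H : Type} [Group H] (V : FDRep ℂ H) (hV : finrank ℂ (V : Type) = 1) :
    Simple V := by
  have : Nontrivial (V : Type) := by
    apply Module.nontrivial_of_finrank_pos (R := ℂ); omega
  constructor
  intro Y f hf
  constructor
  · rintro hiso rfl
    have h1 : (𝟙 V : V ⟶ V) = 0 := by
      rw [← IsIso.inv_hom_id (0 : Y ⟶ V), Limits.comp_zero]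
    obtain ⟨v, hv⟩ := exists_ne (0 : (V : Type))
    apply hv
    have := congrArg (fun (m : V ⟶ V) => (m.hom.hom.hom : (V:Type) →ₗ[ℂ] (V:Type)) v) h1
    simpa using this
  · intro hne
    have hcomm : ∀ (g : H) (y : (Y:Type)), f.hom (Y.ρ g y) = V.ρ g (f.hom y) := by
      intro g y
      exact congrArg (fun (m : Y.V ⟶ V.V) => (m.hom.hom : (Y:Type) →ₗ[ℂ] (V:Type)) y) (f.comm g)
    -- injectivity
    have hinj : Function.Injective (f.hom.hom.hom : (Y:Type) →ₗ[ℂ] (V:Type)) := by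
      rw [← LinearMap.ker_eq_bot]
      have stab : ∀ g : H, ∀ x ∈ LinearMap.ker (f.hom.hom.hom : (Y:Type) →ₗ[ℂ] (V:Type)),
          Y.ρ g x ∈ LinearMap.ker (f.hom.hom.hom : (Y:Type) →ₗ[ℂ] (V:Type)) := by
        intro g x hx
        rw [LinearMap.mem_ker] at hx ⊢
        calc f.hom ((Y.ρ g) x) = (V.ρ g) (f.hom x) := hcomm g x
          _ = 0 := (congrArg (V.ρ g) hx).trans (map_zero _)
      let ρK : Representation ℂ H (LinearMap.ker (f.hom.hom.hom : (Y:Type) →ₗ[ℂ] (V:Type))) :=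
        { toFun := fun g => (Y.ρ g).restrict (stab g)
          map_one' := LinearMap.ext fun x => Subtype.ext (by
            show (Y.ρ 1) x.1 = x.1; rw [map_one]; rfl)
          map_mul' := fun a b => LinearMap.ext fun x => Subtype.ext (by
            show (Y.ρ (a * b)) x.1 = (Y.ρ a) ((Y.ρ b) x.1); rw [map_mul]; rfl) }
      let Z : FDRep ℂ H := FDRep.of ρK
      let ι : Z ⟶ Y := ⟨ConcreteCategory.ofHom (LinearMap.ker (f.hom.hom.hom : (Y:Type) →ₗ[ℂ] (V:Type))).subtype,
        fun g => FGModuleCat.hom_ext (LinearMap.ext fun x => rfl)⟩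
      have hcomp : ι ≫ f = 0 := by
        apply Action.hom_ext
        exact FGModuleCat.hom_ext (LinearMap.ext fun x => x.2)
      have hι : ι = 0 := (cancel_mono f).mp (by rw [hcomp, Limits.zero_comp])
      ext x
      constructor
      · intro hx
        have := congrArg (fun (m : Z ⟶ Y) => (m.hom.hom.hom : _ →ₗ[ℂ] (Y:Type)) ⟨x, hx⟩) hι
        exact this
      · intro hx
        simp only [Submodule.mem_bot] at hx
        subst hx; exact (LinearMap.ker _).zero_mem
    have hsurj : Function.Surjective (f.hom.hom.hom : (Y:Type) →ₗ[ℂ] (V:Type)) := by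
      rw [← LinearMap.range_eq_top]
      have h0 : LinearMap.range (f.hom.hom.hom : (Y:Type) →ₗ[ℂ] (V:Type)) ≠ ⊥ := by
        intro h
        apply hne
        apply Action.hom_ext
        exact FGModuleCat.hom_ext (LinearMap.range_eq_bot.mp h)
      have hV' : finrank ℂ (↑V.V : Type) = 1 := hV
      apply Submodule.eq_top_of_finrank_eq
      have h1 : finrank ℂ (LinearMap.range (f.hom.hom.hom : (Y:Type) →ₗ[ℂ] (V:Type))) ≠ 0 :=
        fun hz => h0 (Submodule.finrank_eq_zero.mp hz)
      have h2 : finrank ℂ (LinearMap.range (f.hom.hom.hom : (Y:Type) →ₗ[ℂ] (V:Type))) ≤ 1 := by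
        rw [← hV']; exact Submodule.finrank_le _
      rw [hV']
      omega
    let e := LinearEquiv.ofBijective (f.hom.hom.hom : (Y:Type) →ₗ[ℂ] (V:Type)) ⟨hinj, hsurj⟩
    have happ : ∀ y, e y = f.hom y := fun y => rfl
    have hsymm : ∀ v, f.hom (e.symm v) = v := fun v => e.apply_symm_apply v
    refine ⟨⟨⟨(ConcreteCategory.ofHom e.symm.toLinearMap : V.V ⟶ Y.V), fun g => FGModuleCat.hom_ext (LinearMap.ext fun v => ?_)⟩, ?_, ?_⟩⟩
    · show e.symm (V.ρ g v) = Y.ρ g (e.symm v)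
      apply hinj
      calc f.hom (e.symm (V.ρ g v)) = V.ρ g v := hsymm _
        _ = V.ρ g (f.hom (e.symm v)) := by rw [hsymm]
        _ = f.hom (Y.ρ g (e.symm v)) := (hcomm g _).symm
    · apply Action.hom_ext
      exact FGModuleCat.hom_ext (LinearMap.ext fun y => e.symm_apply_apply y)
    · apply Action.hom_ext
      exact FGModuleCat.hom_ext (LinearMap.ext fun v => hsymm v)


noncomputable def oneDimRep {H : Type} [Group H] (χ : H →* ℂˣ) : Representation ℂ H ℂ where
  toFun h := (χ h : ℂ) • LinearMap.id
  map_one' := by simp; rfl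
  map_mul' a b := by
    refine LinearMap.ext fun x => ?_
    simp [Module.End.mul_apply, mul_assoc, mul_comm, mul_left_comm]

lemma char_oneDimRep {H : Type} [Group H] (χ : H →* ℂˣ) (h : H) :
    (FDRep.of (oneDimRep χ)).character h = (χ h : ℂ) := by
  show LinearMap.trace ℂ _ ((oneDimRep χ) h) = _
  rw [oneDimRep]
  simp only [MonoidHom.coe_mk, OneHom.coe_mk, map_smul, LinearMap.trace_id]
  simp

lemma trace_comp_one_dim {V : Type} [AddCommGroup V] [Module ℂ V] [FiniteDimensional ℂ V]
    (hV : finrank ℂ V = 1) (f g : V →ₗ[ℂ] V) :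
    LinearMap.trace ℂ V (f ∘ₗ g) = LinearMap.trace ℂ V f * LinearMap.trace ℂ V g := by
  let b : Basis (Fin 1) ℂ V := Module.finBasisOfFinrankEq ℂ V hV
  rw [LinearMap.trace_eq_matrix_trace ℂ b, LinearMap.trace_eq_matrix_trace ℂ b,
      LinearMap.trace_eq_matrix_trace ℂ b, LinearMap.toMatrix_comp b b b]
  simp [Matrix.trace, Matrix.mul_apply, Fin.sum_univ_one]

lemma char_map_mul {H : Type} [Group H] {χ : H → ℂ} (hirr : IsIrrChar H χ)
    (h1 : χ 1 = 1) (a b : H) : χ (a * b) = χ a * χ b := by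
  obtain ⟨V, _, rfl⟩ := hirr
  have hfr : finrank ℂ (V : Type) = 1 := by
    have := FDRep.char_one V
    rw [h1] at this
    exact_mod_cast this.symm
  show LinearMap.trace ℂ _ (V.ρ (a * b)) = LinearMap.trace ℂ _ (V.ρ a) * LinearMap.trace ℂ _ (V.ρ b)
  rw [map_mul, Module.End.mul_eq_comp, trace_comp_one_dim hfr]

end CT

namespace CT
open scoped commutatorElement
/-- [N,G] equals the intersection of the kernels of all linear
G-invariant irreducible characters of N. -/
theorem commutator_eq_iInter_ker
    {G : Type} [Group G] [Fintype G] (N : Subgroup G) [N.Normal] :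
    ((⁅N, (⊤ : Subgroup G)⁆ : Subgroup G) : Set G) =
      ⋂ θ ∈ {θ : ↥N → ℂ | IsIrrChar ↥N θ ∧ θ 1 = 1 ∧ IsInv N θ},
        {g : G | ∃ h : g ∈ N, θ ⟨g, h⟩ = θ 1} := by
  classical
  apply subset_antisymm
  · -- commutator ⊆ intersection of kernels
    intro x hx
    simp only [Set.mem_iInter, Set.mem_setOf_eq, SetLike.mem_coe] at hx ⊢
    rintro θ ⟨hirr, h1, hinv⟩
    have hmul : ∀ a b : ↥N, θ (a * b) = θ a * θ b := char_map_mul hirr h1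
    have hinv' : ∀ (g : G) (n : ↥N) (h : g * (n : G) * g⁻¹ ∈ N),
        θ ⟨g * (n : G) * g⁻¹, h⟩ = θ n := by
      intro g n h
      have := congrFun (hinv g) n
      exact this
    let S : Subgroup G :=
      { carrier := {g : G | ∃ h : g ∈ N, θ ⟨g, h⟩ = θ 1}
        one_mem' := ⟨N.one_mem, rfl⟩
        mul_mem' := by
          rintro a b ⟨ha, ea⟩ ⟨hb, eb⟩
          refine ⟨mul_mem ha hb, ?_⟩
          have h2 : (⟨a * b, mul_mem ha hb⟩ : ↥N) = ⟨a, ha⟩ * ⟨b, hb⟩ := rfl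
          rw [h2, hmul, ea, eb, h1, mul_one]
        inv_mem' := by
          rintro a ⟨ha, ea⟩
          refine ⟨inv_mem ha, ?_⟩
          have h2 : (⟨a, ha⟩ : ↥N) * ⟨a⁻¹, inv_mem ha⟩ = 1 := by
            ext; simp
          have h3 := hmul ⟨a, ha⟩ ⟨a⁻¹, inv_mem ha⟩
          rw [h2, ea, h1, one_mul] at h3
          rw [h1]
          exact h3.symm }
    have hle : ⁅N, (⊤ : Subgroup G)⁆ ≤ S := by
      rw [Subgroup.commutator_le]
      intro n hn g _
      have hcn : g * (n : G)⁻¹ * g⁻¹ ∈ N := ‹N.Normal›.conj_mem _ (inv_mem hn) g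
      have hmemN : n * g * n⁻¹ * g⁻¹ ∈ N := by
        have : n * g * n⁻¹ * g⁻¹ = n * (g * n⁻¹ * g⁻¹) := by group
        rw [this]
        exact mul_mem hn hcn
      refine ⟨by rwa [commutatorElement_def], ?_⟩
      have h2 : (⟨⁅n, g⁆, by rwa [commutatorElement_def]⟩ : ↥N) =
          ⟨n, hn⟩ * ⟨g * n⁻¹ * g⁻¹, hcn⟩ := by
        ext; simp [commutatorElement_def, mul_assoc]
      rw [h2, hmul]
      have h3 : (⟨g * n⁻¹ * g⁻¹, hcn⟩ : ↥N) = ⟨g * ((⟨n, hn⟩ : ↥N)⁻¹ : ↥N) * g⁻¹, by simpa using hcn⟩ := rfl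
      rw [h3, hinv' g (⟨n, hn⟩ : ↥N)⁻¹]
      rw [← hmul, mul_inv_cancel]
    exact (hle hx : x ∈ S).imp (fun _ e => e) |>.elim fun h e => ⟨h, e⟩
  · -- intersection of kernels ⊆ commutator
    intro x hx
    simp only [Set.mem_iInter, Set.mem_setOf_eq] at hx
    -- trivial character gives x ∈ N
    have htriv := hx (fun _ => (1 : ℂ))
      ⟨⟨FDRep.of (oneDimRep (1 : ↥N →* ℂˣ)), simple_of_finrank_one _ (Module.finrank_self ℂ),
        funext fun n => by rw [char_oneDimRep]; simp⟩, rfl, fun g => funext fun n => rfl⟩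
    obtain ⟨hxN, -⟩ := htriv
    simp only [SetLike.mem_coe]
    by_contra hcon
    -- quotient by [N,G] ∩ N
    haveI hKnorm : ((⁅N, (⊤ : Subgroup G)⁆).subgroupOf N).Normal :=
      Subgroup.Normal.subgroupOf inferInstance N
    letI : CommGroup (↥N ⧸ (⁅N, (⊤ : Subgroup G)⁆).subgroupOf N) :=
      { (inferInstance : Group (↥N ⧸ (⁅N, (⊤ : Subgroup G)⁆).subgroupOf N)) with
        mul_comm := fun a b => QuotientGroup.induction_on a fun a =>
          QuotientGroup.induction_on b fun b => by
            rw [← QuotientGroup.mk_mul, ← QuotientGroup.mk_mul, QuotientGroup.eq,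
                Subgroup.mem_subgroupOf]
            have h : (((a * b)⁻¹ * (b * a) : ↥N) : G) = ⁅((b : G))⁻¹, ((a : G))⁻¹⁆ := by
              push_cast
              group
            rw [h]
            exact Subgroup.commutator_mem_commutator (inv_mem b.2) (Subgroup.mem_top _) }
    haveI : NeZero (Monoid.exponent (↥N ⧸ (⁅N, (⊤ : Subgroup G)⁆).subgroupOf N)) :=
      ⟨(Monoid.exponent_pos.mpr Monoid.ExponentExists.of_finite).ne'⟩
    have hne1 : (QuotientGroup.mk (⟨x, hxN⟩ : ↥N) :
        ↥N ⧸ (⁅N, (⊤ : Subgroup G)⁆).subgroupOf N) ≠ 1 := by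
      rw [Ne, QuotientGroup.eq_one_iff, Subgroup.mem_subgroupOf]
      exact hcon
    obtain ⟨φ, hφ⟩ := CommGroup.exists_apply_ne_one_of_hasEnoughRootsOfUnity
      (↥N ⧸ (⁅N, (⊤ : Subgroup G)⁆).subgroupOf N) ℂ hne1
    set χh : ↥N →* ℂˣ :=
      φ.comp (QuotientGroup.mk' ((⁅N, (⊤ : Subgroup G)⁆).subgroupOf N)) with hχh
    have hinvθ : IsInv N (fun n => (χh n : ℂ)) := by
      intro g
      funext n
      show ((χh ⟨g * (n : G) * g⁻¹, _⟩ : ℂˣ) : ℂ) = ((χh n : ℂˣ) : ℂ)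
      congr 1
      show φ (QuotientGroup.mk _) = φ (QuotientGroup.mk _)
      congr 1
      rw [QuotientGroup.eq, Subgroup.mem_subgroupOf]
      have h : (((⟨g * (n : G) * g⁻¹, ‹N.Normal›.conj_mem _ n.2 g⟩ : ↥N)⁻¹ * n : ↥N) : G) =
          ⁅g, ((n : G))⁻¹⁆ := by
        push_cast
        group
      rw [h, Subgroup.commutator_comm]
      exact Subgroup.commutator_mem_commutator (Subgroup.mem_top _) (inv_mem n.2)
    obtain ⟨hxN', he⟩ := hx (fun n => (χh n : ℂ))
      ⟨⟨FDRep.of (oneDimRep χh), simple_of_finrank_one _ (Module.finrank_self ℂ),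
        funext fun n => (char_oneDimRep χh n).symm⟩, by simp, hinvθ⟩
    apply hφ
    have h2 : χh ⟨x, hxN'⟩ = 1 := by
      apply Units.ext
      rw [he]
      simp
    have h3 : (⟨x, hxN'⟩ : ↥N) = ⟨x, hxN⟩ := rfl
    rw [h3] at h2
    exact h2

end CT
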